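/- Let λ, k be real numbers and let a, b : (0, ∞) → ℂ be continuously differentiable functions satisfying, for all x > 0, the system −a'(x) + ((λ−2)/x)·a(x) + k·b(x) = 0 and b'(x) + (λ/x)·b(x) − k·a(x) = 0. If ∫_{(0,∞)} (|a(x)|² + |b(x)|²)·x² dx < ∞ and a, b are not both identically zero, then 1/2 < λ < 3/2. -/

import Mathlib

open MeasureTheory Set

/-- A nonnegative continuous function on `(0,∞)` with zero integral vanishes. -/
lemma aux_zero_on {f : ℝ → ℝ} (hf : ContinuousOn f (Ioi (0:ℝ)))
    (h0 : ∀ x ∈ Ioi (0:ℝ), 0 ≤ f x) (hfi : IntegrableOn f (Ioi (0:ℝ)))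
    (hz : ∫ x in Ioi (0:ℝ), f x = 0) : ∀ x ∈ Ioi (0:ℝ), f x = 0 := by
  have hae : f =ᵐ[volume.restrict (Ioi (0:ℝ))] 0 := by
    refine (integral_eq_zero_iff_of_nonneg_ae ?_ hfi).mp hz
    refine (ae_restrict_iff' measurableSet_Ioi).mpr (Filter.Eventually.of_forall ?_)
    exact fun x hx => h0 x hx
  have hae' : ∀ᵐ y ∂volume, y ∈ Ioi (0:ℝ) → f y = 0 :=
    (ae_restrict_iff' measurableSet_Ioi).mp hae
  intro x hx
  by_contra hne
  have hpos : 0 < f x := lt_of_le_of_ne (h0 x hx) (Ne.symm hne)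
  have hc : ContinuousAt f x := hf.continuousAt (isOpen_Ioi.mem_nhds hx)
  have h1 : ∀ᶠ y in nhds x, f x / 2 < f y :=
    hc.eventually_const_lt (half_lt_self hpos)
  have h2 : ∀ᶠ y in nhds x, (0:ℝ) < y := eventually_gt_nhds hx
  obtain ⟨t, htp, hto, hxt⟩ := eventually_nhds_iff.mp (h1.and h2)
  have htm : volume t ≠ 0 := (hto.measure_pos volume ⟨x, hxt⟩).ne'
  have hne2 : (ae (volume.restrict t)).NeBot := by
    refine ae_neBot.mpr ?_
    simpa [Measure.restrict_eq_zero] using htm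
  have h3 : ∀ᵐ y ∂volume.restrict t, y ∈ Ioi (0:ℝ) → f y = 0 :=
    ae_restrict_of_ae hae'
  have h4 : ∀ᵐ y ∂volume.restrict t, y ∈ t := self_mem_ae_restrict hto.measurableSet
  obtain ⟨y, hy1, hy2⟩ := (h3.and h4).exists
  obtain ⟨hfy, hy0⟩ := htp y hy2
  have := hy1 hy0
  linarith

theorem eigenvalue_constraint (lam k : ℝ) (a b a' b' : ℝ → ℂ)
    (ha : ∀ x ∈ Ioi (0 : ℝ), HasDerivAt a (a' x) x)
    (hb : ∀ x ∈ Ioi (0 : ℝ), HasDerivAt b (b' x) x)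
    (hca : ContinuousOn a' (Ioi (0 : ℝ))) (hcb : ContinuousOn b' (Ioi (0 : ℝ)))
    (heq1 : ∀ x ∈ Ioi (0 : ℝ),
      -a' x + (((lam - 2) / x : ℝ) : ℂ) * a x + (k : ℂ) * b x = 0)
    (heq2 : ∀ x ∈ Ioi (0 : ℝ),
      b' x + ((lam / x : ℝ) : ℂ) * b x - (k : ℂ) * a x = 0)
    (hint : IntegrableOn (fun x => (‖a x‖ ^ 2 + ‖b x‖ ^ 2) * x ^ 2) (Ioi (0 : ℝ)))
    (hne : ¬ ∀ x ∈ Ioi (0 : ℝ), a x = 0 ∧ b x = 0) :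
    1 / 2 < lam ∧ lam < 3 / 2 := by
  -- notation
  set f : ℝ → ℝ := fun x => ‖a x‖^2 with hf_def
  set g : ℝ → ℝ := fun x => ‖b x‖^2 with hg_def
  set G : ℝ → ℝ := fun x => x^3 * (f x - g x) with hG_def
  set h : ℝ → ℝ := fun x => (2*lam-1) * (x^2 * f x) + (2*lam-3) * (x^2 * g x) with hh_def
  -- continuity of a, b
  have hcA : ContinuousOn a (Ioi (0:ℝ)) :=
    fun x hx => (ha x hx).differentiableAt.continuousAt.continuousWithinAt
  have hcB : ContinuousOn b (Ioi (0:ℝ)) :=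
    fun x hx => (hb x hx).differentiableAt.continuousAt.continuousWithinAt
  have hcf : ContinuousOn f (Ioi (0:ℝ)) := (hcA.norm.pow 2)
  have hcg : ContinuousOn g (Ioi (0:ℝ)) := (hcB.norm.pow 2)
  have hf0 : ∀ x, 0 ≤ f x := fun x => by positivity
  have hg0 : ∀ x, 0 ≤ g x := fun x => by positivity
  -- the derivative identity
  have hderiv : ∀ x ∈ Ioi (0:ℝ), HasDerivAt G (h x) x := by
    intro x hx
    simp only [hG_def, hh_def, hf_def, hg_def]
    have hx0 : (0:ℝ) < x := hx
    have hxne : x ≠ 0 := ne_of_gt hx0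
    have hxc : (x:ℂ) ≠ 0 := Complex.ofReal_ne_zero.mpr hxne
    have hda := ha x hx
    have hdb := hb x hx
    have e1 : a' x = (((lam - 2) / x : ℝ) : ℂ) * a x + (k:ℂ) * b x := by
      linear_combination -(heq1 x hx)
    have e2 : b' x = (k:ℂ) * a x - ((lam / x : ℝ) : ℂ) * b x := by
      linear_combination heq2 x hx
    set P : ℝ → ℂ := fun y => a y * star (a y) - b y * star (b y) with hP_def
    set Q : ℂ := (a' x * star (a x) + a x * star (a' x))
        - (b' x * star (b x) + b x * star (b' x)) with hQ_def
    have hP : HasDerivAt P Q x := (hda.mul hda.star).sub (hdb.mul hdb.star)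
    have h3 : HasDerivAt (fun y : ℝ => y^3) (3*x^2) x := by
      simpa using hasDerivAt_pow 3 x
    have hPhi : HasDerivAt (fun y => y^3 • P y) (x^3 • Q + (3*x^2) • P x) x := h3.smul hP
    have hre : HasDerivAt (fun y => ((y^3 : ℝ) • P y).re) ((x^3 • Q + (3*x^2) • P x).re) x :=
      Complex.reCLM.hasFDerivAt.comp_hasDerivAt x hPhi
    have hGeq : (fun y => ((y^3 : ℝ) • P y).re) = (fun y => y^3 * (‖a y‖^2 - ‖b y‖^2)) := by
      funext y
      simp only [hP_def, Complex.real_smul, ← starRingEnd_apply, Complex.mul_conj,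
        Complex.sub_re, Complex.re_ofReal_mul, Complex.ofReal_sub, Complex.ofReal_re,
        Complex.normSq_eq_norm_sq]
    have hcid : (((3*x^2 : ℝ)):ℂ) * P x + ((x^3:ℝ):ℂ) * Q =
        (((2*lam-1) * x^2 : ℝ):ℂ) * (a x * star (a x))
        + (((2*lam-3) * x^2 : ℝ):ℂ) * (b x * star (b x)) := by
      simp only [hP_def, hQ_def, e1, e2, star_add, star_sub, star_mul, ← starRingEnd_apply,
        map_add, map_mul, map_sub, Complex.conj_ofReal]
      push_cast
      field_simp
      ring
    have hval : (x^3 • Q + (3*x^2) • P x).re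
        = (2*lam-1) * (x^2 * ‖a x‖^2) + (2*lam-3) * (x^2 * ‖b x‖^2) := by
      have h4 : (x^3 • Q + (3*x^2) • P x) = (((3*x^2 : ℝ)):ℂ) * P x + ((x^3:ℝ):ℂ) * Q := by
        rw [Complex.real_smul, Complex.real_smul]
        push_cast
        ring
      rw [h4, hcid]
      simp only [← starRingEnd_apply, Complex.mul_conj, Complex.add_re,
        Complex.re_ofReal_mul, Complex.ofReal_re, Complex.normSq_eq_norm_sq]
      ring
    rw [← hGeq, ← hval]
    exact hre
  -- integrability
  have hint_f : IntegrableOn (fun x => x^2 * f x) (Ioi (0:ℝ)) := by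
    refine Integrable.mono' hint
      (((continuousOn_pow 2).mul hcf).aestronglyMeasurable measurableSet_Ioi) ?_
    refine (ae_restrict_iff' measurableSet_Ioi).mpr (Filter.Eventually.of_forall ?_)
    intro x hx
    have hx0 : (0:ℝ) < x := hx
    simp only [hf_def]
    rw [Real.norm_eq_abs, abs_of_nonneg (by positivity)]
    nlinarith [sq_nonneg x, norm_nonneg (b x), sq_nonneg (‖b x‖)]
  have hint_g : IntegrableOn (fun x => x^2 * g x) (Ioi (0:ℝ)) := by
    refine Integrable.mono' hint
      (((continuousOn_pow 2).mul hcg).aestronglyMeasurable measurableSet_Ioi) ?_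
    refine (ae_restrict_iff' measurableSet_Ioi).mpr (Filter.Eventually.of_forall ?_)
    intro x hx
    have hx0 : (0:ℝ) < x := hx
    simp only [hg_def]
    rw [Real.norm_eq_abs, abs_of_nonneg (by positivity)]
    nlinarith [sq_nonneg x, norm_nonneg (a x), sq_nonneg (‖a x‖)]
  have hint_h : IntegrableOn h (Ioi (0:ℝ)) :=
    (hint_f.const_mul _).add (hint_g.const_mul _)
  -- fundamental theorem of calculus
  have ftc : ∀ u v : ℝ, 0 < u → u ≤ v → ∫ t in Ioc u v, h t = G v - G u := by
    intro u v hu huv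
    have hsub : Set.uIcc u v ⊆ Ioi (0:ℝ) := by
      rw [uIcc_of_le huv]
      intro y hy; exact lt_of_lt_of_le hu hy.1
    have hii : IntervalIntegrable h volume u v := by
      rw [intervalIntegrable_iff_integrableOn_Ioc_of_le huv]
      exact hint_h.mono_set (fun y hy => lt_trans hu hy.1)
    have := intervalIntegral.integral_eq_sub_of_hasDerivAt
      (fun y hy => hderiv y (hsub hy)) hii
    rw [← this, intervalIntegral.integral_of_le huv]
  -- |G| is controlled by the integrand
  have hGbound : ∀ x : ℝ, 0 < x → |G x| ≤ x * ((f x + g x) * x^2) := by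
    intro x hx
    have : |f x - g x| ≤ f x + g x := by
      rw [abs_sub_le_iff]; constructor <;> nlinarith [hf0 x, hg0 x]
    calc |G x| = x^3 * |f x - g x| := by
          rw [hG_def]; rw [abs_mul, abs_of_nonneg (by positivity : (0:ℝ) ≤ x^3)]
      _ ≤ x^3 * (f x + g x) := by
          exact mul_le_mul_of_nonneg_left this (by positivity)
      _ = x * ((f x + g x) * x^2) := by ring
  -- smallness of G near 0 and ∞
  have small_top : ∀ ε : ℝ, 0 < ε → ∀ c : ℝ, 0 < c → ∃ y, c < y ∧ |G y| < ε := by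
    intro ε hε c hc
    by_contra hcon
    push_neg at hcon
    have hinv : IntegrableOn (fun y : ℝ => y⁻¹) (Ioi c) := by
      refine Integrable.mono' ((hint.mono_set (Ioi_subset_Ioi hc.le)).const_mul ε⁻¹)
        (Measurable.aestronglyMeasurable measurable_inv) ?_
      refine (ae_restrict_iff' measurableSet_Ioi).mpr (Filter.Eventually.of_forall ?_)
      intro y hy
      have hcy : c < y := hy
      have hy0 : 0 < y := lt_trans hc hcy
      have h1 : ε ≤ y * ((f y + g y) * y^2) := le_trans (hcon y hcy) (hGbound y hy0)
      rw [Real.norm_eq_abs, abs_of_pos (by positivity)]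
      have h3 : ε / y ≤ (f y + g y) * y^2 := (div_le_iff₀ hy0).mpr (by linarith)
      calc y⁻¹ = ε⁻¹ * (ε / y) := by field_simp
        _ ≤ ε⁻¹ * ((f y + g y) * y^2) :=
            mul_le_mul_of_nonneg_left h3 (inv_nonneg.mpr hε.le)
        _ = ε⁻¹ * ((‖a y‖^2 + ‖b y‖^2) * y^2) := by rw [hf_def, hg_def]
    have h5 : IntegrableOn (fun y : ℝ => y ^ (-1 : ℝ)) (Ioi c) := by
      refine hinv.congr_fun (fun y hy => ?_) measurableSet_Ioi
      rw [Real.rpow_neg_one]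
    have := (integrableOn_Ioi_rpow_iff hc).mp h5
    norm_num at this
  have small_bot : ∀ ε : ℝ, 0 < ε → ∀ c : ℝ, 0 < c → ∃ y, 0 < y ∧ y < c ∧ |G y| < ε := by
    intro ε hε c hc
    by_contra hcon
    push_neg at hcon
    have hinv : IntegrableOn (fun y : ℝ => y⁻¹) (Ioo (0:ℝ) c) := by
      refine Integrable.mono' ((hint.mono_set (fun y hy => hy.1)).const_mul ε⁻¹)
        (Measurable.aestronglyMeasurable measurable_inv) ?_
      refine (ae_restrict_iff' measurableSet_Ioo).mpr (Filter.Eventually.of_forall ?_)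
      intro y hy
      have hy0 : 0 < y := hy.1
      have h1 : ε ≤ y * ((f y + g y) * y^2) :=
        le_trans (hcon y hy0 hy.2) (hGbound y hy0)
      rw [Real.norm_eq_abs, abs_of_pos (by positivity)]
      have h3 : ε / y ≤ (f y + g y) * y^2 := (div_le_iff₀ hy0).mpr (by linarith)
      calc y⁻¹ = ε⁻¹ * (ε / y) := by field_simp
        _ ≤ ε⁻¹ * ((f y + g y) * y^2) :=
            mul_le_mul_of_nonneg_left h3 (inv_nonneg.mpr hε.le)
        _ = ε⁻¹ * ((‖a y‖^2 + ‖b y‖^2) * y^2) := by rw [hf_def, hg_def]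
    have h5 : IntegrableOn (fun y : ℝ => y ^ (-1 : ℝ)) (Ioo (0:ℝ) c) := by
      refine hinv.congr_fun (fun y hy => ?_) measurableSet_Ioo
      rw [Real.rpow_neg_one]
    have := (intervalIntegral.integrableOn_Ioo_rpow_iff hc).mp h5
    norm_num at this
  -- the integral of h over (0, ∞) vanishes
  have hint0 : ∫ x in Ioi (0:ℝ), h x = 0 := by
    have hu : ∀ n : ℕ, ∃ u : ℝ, 0 < u ∧ u < 1/((n:ℝ)+1) ∧ |G u| < 1/((n:ℝ)+1) := by
      intro n
      obtain ⟨y, hy1, hy2, hy3⟩ :=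
        small_bot (1/((n:ℝ)+1)) (by positivity) (1/((n:ℝ)+1)) (by positivity)
      exact ⟨y, hy1, hy2, hy3⟩
    have hv : ∀ n : ℕ, ∃ v : ℝ, ((n:ℝ)+1) < v ∧ |G v| < 1/((n:ℝ)+1) := by
      intro n
      exact small_top (1/((n:ℝ)+1)) (by positivity) ((n:ℝ)+1) (by positivity)
    choose u hu1 hu2 hu3 using hu
    choose v hv1 hv2 using hv
    have huv : ∀ n, u n ≤ v n := by
      intro n
      have h1 : u n < 1/((n:ℝ)+1) := hu2 n
      have h2 : (1:ℝ)/((n:ℝ)+1) ≤ 1 := by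
        rw [div_le_one (by positivity)]
        simp
      have h3 : (1:ℝ) ≤ (n:ℝ)+1 := by simp
      linarith [hv1 n]
    have hIoc : ∀ n, ∫ x in Ioc (u n) (v n), h x = G (v n) - G (u n) :=
      fun n => ftc (u n) (v n) (hu1 n) (huv n)
    have hlim1 : Filter.Tendsto (fun n => G (v n) - G (u n)) Filter.atTop (nhds 0) := by
      have d1 : Filter.Tendsto (fun n => G (v n)) Filter.atTop (nhds 0) :=
        squeeze_zero_norm (fun n => (hv2 n).le) tendsto_one_div_add_atTop_nhds_zero_nat
      have d2 : Filter.Tendsto (fun n => G (u n)) Filter.atTop (nhds 0) :=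
        squeeze_zero_norm (fun n => (hu3 n).le) tendsto_one_div_add_atTop_nhds_zero_nat
      simpa using d1.sub d2
    have hlim2 : Filter.Tendsto (fun n => ∫ x in Ioc (u n) (v n), h x)
        Filter.atTop (nhds (∫ x in Ioi (0:ℝ), h x)) := by
      have heq : ∀ n, ∫ x in Ioc (u n) (v n), h x
          = ∫ x in Ioi (0:ℝ), (Ioc (u n) (v n)).indicator h x := by
        intro n
        have hss : Ioc (u n) (v n) ∩ Ioi (0:ℝ) = Ioc (u n) (v n) :=
          inter_eq_left.mpr (fun y hy => lt_trans (hu1 n) hy.1)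
        rw [integral_indicator measurableSet_Ioc,
          Measure.restrict_restrict measurableSet_Ioc, hss]
      simp_rw [heq]
      refine tendsto_integral_of_dominated_convergence (fun x => ‖h x‖) ?_ ?_ ?_ ?_
      · exact fun n => hint_h.aestronglyMeasurable.indicator measurableSet_Ioc
      · exact hint_h.norm
      · exact fun n => Filter.Eventually.of_forall (fun x => norm_indicator_le_norm_self h x)
      · refine (ae_restrict_iff' measurableSet_Ioi).mpr (Filter.Eventually.of_forall ?_)
        intro x hx
        have hx0 : (0:ℝ) < x := hx
        refine Filter.Tendsto.congr' ?_ tendsto_const_nhds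
        have h1 : ∀ᶠ n : ℕ in Filter.atTop, u n < x := by
          have ht : Filter.Tendsto (fun n : ℕ => 1/((n:ℝ)+1)) Filter.atTop (nhds 0) :=
            tendsto_one_div_add_atTop_nhds_zero_nat
          filter_upwards [ht.eventually_lt_const hx0] with n hn
          exact lt_trans (hu2 n) hn
        have h2 : ∀ᶠ n : ℕ in Filter.atTop, x ≤ v n := by
          filter_upwards [Filter.eventually_ge_atTop ⌈x⌉₊] with n hn
          have hxn : x ≤ (n:ℝ) := le_trans (Nat.le_ceil x) (by exact_mod_cast hn)
          linarith [hv1 n]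
        filter_upwards [h1, h2] with n hn1 hn2
        exact (indicator_of_mem (mem_Ioc.mpr ⟨hn1, hn2⟩) h).symm
    exact tendsto_nhds_unique hlim2
      (Filter.Tendsto.congr (fun n => (hIoc n).symm) hlim1)
  -- expand the integral
  have hexp : (2*lam-1) * (∫ x in Ioi (0:ℝ), x^2 * f x)
      + (2*lam-3) * (∫ x in Ioi (0:ℝ), x^2 * g x) = 0 := by
    rw [← integral_const_mul, ← integral_const_mul,
      ← integral_add (hint_f.const_mul _) (hint_g.const_mul _)]
    exact hint0
  set F : ℝ := ∫ x in Ioi (0:ℝ), x^2 * f x with hF_def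
  set Gi : ℝ := ∫ x in Ioi (0:ℝ), x^2 * g x with hGi_def
  have hFnn : 0 ≤ F := setIntegral_nonneg measurableSet_Ioi
    (fun x hx => by have := hf0 x; positivity)
  have hGinn : 0 ≤ Gi := setIntegral_nonneg measurableSet_Ioi
    (fun x hx => by have := hg0 x; positivity)
  -- vanishing integrals imply vanishing functions
  have hFzero : F = 0 → ∀ x ∈ Ioi (0:ℝ), a x = 0 := by
    intro hF x hx
    have h1 : ∀ y ∈ Ioi (0:ℝ), y^2 * f y = 0 := by
      refine aux_zero_on ?_ ?_ hint_f hF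
      · exact (continuousOn_pow 2).mul hcf
      · intro y hy; have := hf0 y; positivity
    have h2 := h1 x hx
    have hx0 : (0:ℝ) < x := hx
    have hfx : f x = 0 := by
      rcases mul_eq_zero.mp h2 with h | h
      · exact absurd h (by positivity)
      · exact h
    have : ‖a x‖ = 0 := by
      have : ‖a x‖^2 = 0 := hfx
      exact pow_eq_zero_iff two_ne_zero |>.mp this
    exact norm_eq_zero.mp this
  have hGzero : Gi = 0 → ∀ x ∈ Ioi (0:ℝ), b x = 0 := by
    intro hG x hx
    have h1 : ∀ y ∈ Ioi (0:ℝ), y^2 * g y = 0 := by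
      refine aux_zero_on ?_ ?_ hint_g hG
      · exact (continuousOn_pow 2).mul hcg
      · intro y hy; have := hg0 y; positivity
    have h2 := h1 x hx
    have hx0 : (0:ℝ) < x := hx
    have hgx : g x = 0 := by
      rcases mul_eq_zero.mp h2 with h | h
      · exact absurd h (by positivity)
      · exact h
    have : ‖b x‖ = 0 := by
      have : ‖b x‖^2 = 0 := hgx
      exact pow_eq_zero_iff two_ne_zero |>.mp this
    exact norm_eq_zero.mp this
  -- if h vanishes identically then G vanishes identically
  have hGconst : (∀ x ∈ Ioi (0:ℝ), h x = 0) → ∀ x ∈ Ioi (0:ℝ), G x = 0 := by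
    intro hh0
    have hconst : ∀ x ∈ Ioi (0:ℝ), G x = G 1 := by
      intro x hx
      have hx0 : (0:ℝ) < x := hx
      have hzero : ∀ p q : ℝ, 0 < p → ∫ t in Ioc p q, h t = 0 := by
        intro p q hp
        rw [setIntegral_congr_fun measurableSet_Ioc
          (fun t ht => hh0 t (lt_trans hp ht.1)), integral_zero]
      rcases le_total x 1 with hle | hle
      · have h1 := ftc x 1 hx0 hle
        rw [hzero x 1 hx0] at h1
        linarith
      · have h1 := ftc 1 x one_pos hle
        rw [hzero 1 x one_pos] at h1
        linarith
    have hc0 : G 1 = 0 := by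
      by_contra hcne
      have hinv : IntegrableOn (fun y : ℝ => y⁻¹) (Ioi (1:ℝ)) := by
        refine Integrable.mono'
          ((hint.mono_set (Ioi_subset_Ioi zero_le_one)).const_mul |G 1|⁻¹)
          (Measurable.aestronglyMeasurable measurable_inv) ?_
        refine (ae_restrict_iff' measurableSet_Ioi).mpr (Filter.Eventually.of_forall ?_)
        intro y hy
        have hy1 : (1:ℝ) < y := hy
        have hy0 : (0:ℝ) < y := lt_trans one_pos hy1
        have hGy : G y = G 1 := hconst y (by exact lt_trans one_pos hy1)
        have h1 : |G 1| ≤ y * ((f y + g y) * y^2) := hGy ▸ hGbound y hy0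
        rw [Real.norm_eq_abs, abs_of_pos (by positivity)]
        have habs : (0:ℝ) < |G 1| := abs_pos.mpr hcne
        have h3 : |G 1| / y ≤ (f y + g y) * y^2 := (div_le_iff₀ hy0).mpr (by linarith)
        calc y⁻¹ = |G 1|⁻¹ * (|G 1| / y) := by field_simp
          _ ≤ |G 1|⁻¹ * ((f y + g y) * y^2) :=
              mul_le_mul_of_nonneg_left h3 (inv_nonneg.mpr habs.le)
          _ = |G 1|⁻¹ * ((‖a y‖^2 + ‖b y‖^2) * y^2) := by rw [hf_def, hg_def]
      have h5 : IntegrableOn (fun y : ℝ => y ^ (-1 : ℝ)) (Ioi (1:ℝ)) := by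
        refine hinv.congr_fun (fun y hy => ?_) measurableSet_Ioi
        rw [Real.rpow_neg_one]
      have := (integrableOn_Ioi_rpow_iff one_pos).mp h5
      norm_num at this
    intro x hx
    rw [hconst x hx, hc0]
  constructor
  · by_contra hl
    push_neg at hl
    have hGi0 : Gi = 0 := by nlinarith [hexp, hFnn, hGinn]
    have hb0 : ∀ x ∈ Ioi (0:ℝ), b x = 0 := hGzero hGi0
    rcases eq_or_lt_of_le hl with heqc | hlt
    · -- lam = 1/2
      have hh0 : ∀ x ∈ Ioi (0:ℝ), h x = 0 := by
        intro x hx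
        have hgx : g x = 0 := by rw [hg_def]; simp [hb0 x hx]
        rw [hh_def]
        simp only [hgx]
        rw [heqc]
        ring
      have hG0 := hGconst hh0
      have ha0 : ∀ x ∈ Ioi (0:ℝ), a x = 0 := by
        intro x hx
        have hx0 : (0:ℝ) < x := hx
        have h1 := hG0 x hx
        have hgx : g x = 0 := by rw [hg_def]; simp [hb0 x hx]
        rw [hG_def] at h1
        simp only [hgx, sub_zero] at h1
        have hfx : f x = 0 := by
          rcases mul_eq_zero.mp h1 with hh | hh
          · exact absurd hh (by positivity)
          · exact hh
        have : ‖a x‖ = 0 := pow_eq_zero_iff two_ne_zero |>.mp hfx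
        exact norm_eq_zero.mp this
      exact hne (fun x hx => ⟨ha0 x hx, hb0 x hx⟩)
    · -- lam < 1/2
      have hF0 : F = 0 := by
        have h1 : (2*lam-1) * F = 0 := by
          rw [hGi0] at hexp
          linarith
        rcases mul_eq_zero.mp h1 with hh | hh
        · linarith
        · exact hh
      exact hne (fun x hx => ⟨hFzero hF0 x hx, hb0 x hx⟩)
  · by_contra hl
    push_neg at hl
    have hF0 : F = 0 := by nlinarith [hexp, hFnn, hGinn]
    have ha0 : ∀ x ∈ Ioi (0:ℝ), a x = 0 := hFzero hF0
    rcases eq_or_lt_of_le hl with heqc | hlt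
    · -- lam = 3/2
      have hh0 : ∀ x ∈ Ioi (0:ℝ), h x = 0 := by
        intro x hx
        have hfx : f x = 0 := by rw [hf_def]; simp [ha0 x hx]
        rw [hh_def]
        simp only [hfx]
        rw [← heqc]
        ring
      have hG0 := hGconst hh0
      have hb0 : ∀ x ∈ Ioi (0:ℝ), b x = 0 := by
        intro x hx
        have hx0 : (0:ℝ) < x := hx
        have h1 := hG0 x hx
        have hfx : f x = 0 := by rw [hf_def]; simp [ha0 x hx]
        rw [hG_def] at h1
        simp only [hfx, zero_sub] at h1
        have hgx : g x = 0 := by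
          rcases mul_eq_zero.mp h1 with hh | hh
          · exact absurd hh (by positivity)
          · linarith [neg_eq_zero.mp hh]
        have : ‖b x‖ = 0 := pow_eq_zero_iff two_ne_zero |>.mp hgx
        exact norm_eq_zero.mp this
      exact hne (fun x hx => ⟨ha0 x hx, hb0 x hx⟩)
    · -- 3/2 < lam
      have hGi0 : Gi = 0 := by
        have h1 : (2*lam-3) * Gi = 0 := by
          rw [hF0] at hexp
          linarith
        rcases mul_eq_zero.mp h1 with hh | hh
        · linarith
        · exact hh
      exact hne (fun x hx => ⟨ha0 x hx, hGzero hGi0 x hx⟩)
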